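/- Let α, β ∈ ℝ⁺ \ {1}, φ₁, φ₂, ψ entire, and Θₙ(x) = α^{φ₁(x)} (dⁿ/dxⁿ)(ψ(x)β^{−φ₂(x)}). Then for all n ≥ 0: ∑_{p=0}^{n} (n choose p) [Θ_{n−p+1}(x) ψ^{(p)}(x) − Θ_{n−p}′(x) ψ^{(p)}(x) + (log α) φ₁′(x) Θ_{n−p}(x) ψ^{(p)}(x)] = 0. -/

import Mathlib

open Complex Finset

theorem recurrence_combined
    (α β : ℝ) (hα : 0 < α) (hα1 : α ≠ 1) (hβ : 0 < β) (hβ1 : β ≠ 1)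
    (φ₁ φ₂ ψ : ℂ → ℂ) (hφ₁ : Differentiable ℂ φ₁) (hφ₂ : Differentiable ℂ φ₂)
    (hψ : Differentiable ℂ ψ)
    (Θ : ℕ → ℂ → ℂ)
    (hΘ : ∀ n x, Θ n x = Complex.exp (φ₁ x * (Real.log α : ℂ)) *
      iteratedDeriv n (fun z => ψ z * Complex.exp (-(φ₂ z) * (Real.log β : ℂ))) x)
    (n : ℕ) (x : ℂ) :
    ∑ p ∈ Finset.range (n + 1), (n.choose p : ℂ) *
        (Θ (n - p + 1) x * iteratedDeriv p ψ x
          - deriv (Θ (n - p)) x * iteratedDeriv p ψ x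
          + (Real.log α : ℂ) * deriv φ₁ x * Θ (n - p) x * iteratedDeriv p ψ x) = 0 := by
  set c : ℂ := (Real.log α : ℂ)
  set f : ℂ → ℂ := fun z => ψ z * Complex.exp (-(φ₂ z) * (Real.log β : ℂ)) with hf_def
  have hf : Differentiable ℂ f := by
    exact hψ.mul ((hφ₂.neg.mul_const _).cexp)
  have hg : ∀ m, Differentiable ℂ (iteratedDeriv m f) := by
    intro m
    induction m with
    | zero => simpa [iteratedDeriv_zero] using hf
    | succ k ih =>
      rw [iteratedDeriv_succ]
      exact ((contDiff_infty_iff_deriv.mp ih.contDiff).2).differentiable (by norm_num)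
  have key : ∀ m, deriv (Θ m) x = c * deriv φ₁ x * Θ m x + Θ (m + 1) x := by
    intro m
    have hΘm : Θ m = fun y => Complex.exp (φ₁ y * c) * iteratedDeriv m f y := by
      funext y; exact hΘ m y
    have h1 : HasDerivAt (fun y => Complex.exp (φ₁ y * c))
        (Complex.exp (φ₁ x * c) * (deriv φ₁ x * c)) x := by
      exact (((hφ₁ x).hasDerivAt.mul_const c).cexp)
    have h2 : HasDerivAt (iteratedDeriv m f) (iteratedDeriv (m + 1) f x) x := by
      rw [iteratedDeriv_succ]
      exact ((hg m) x).hasDerivAt.congr_deriv rfl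
    have h : deriv (fun y => Complex.exp (φ₁ y * c) * iteratedDeriv m f y) x = _ := (h1.mul h2).deriv
    rw [hΘm]
    rw [h]
    simp only [hΘ]
    ring
  have hzero : ∀ p ∈ Finset.range (n + 1), (n.choose p : ℂ) *
        (Θ (n - p + 1) x * iteratedDeriv p ψ x
          - deriv (Θ (n - p)) x * iteratedDeriv p ψ x
          + c * deriv φ₁ x * Θ (n - p) x * iteratedDeriv p ψ x) = 0 := by
    intro p _
    rw [key (n - p)]
    ring
  exact Finset.sum_eq_zero hzero
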